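/- arXiv:1401.3321 — 2 statements merged into one kernel-verified Lean document; each statement's English description precedes it below -/
import Mathlib

section
/- Degenerate q-Gauss sum: for |q|<1, any n ∈ ℕ, and parameters b, c with (c;q)_n ≠ 0 and (q;q)_j (c;q)_j ≠ 0 for j ≤ n, ∑_{j=0}^{n} [(q^{-n};q)_j (b;q)_j / ((q;q)_j (c;q)_j)] q^j = b^n (c/b;q)_n / (c;q)_n. -/
noncomputable def qp (a q : ℂ) (n : ℕ) : ℂ := ∏ i ∈ Finset.range n, (1 - a * q ^ i)

lemma qp_zero (a q : ℂ) : qp a q 0 = 1 := by simp [qp]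

lemma qp_succ (a q : ℂ) (n : ℕ) : qp a q (n+1) = qp a q n * (1 - a * q ^ n) :=
  Finset.prod_range_succ _ _

lemma qp_succ' (a q : ℂ) (n : ℕ) : qp a q (n+1) = (1 - a) * qp (a*q) q n := by
  rw [qp, Finset.prod_range_succ', qp, mul_comm, pow_zero, mul_one]
  congr 1
  apply Finset.prod_congr rfl
  intro i _
  ring

lemma qp_vanish (q : ℂ) (hq0 : q ≠ 0) (n : ℕ) : qp ((q^n)⁻¹) q (n+1) = 0 := by
  apply Finset.prod_eq_zero (Finset.self_mem_range_succ n)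
  field_simp
  norm_num

lemma key (q : ℂ) (hq0 : q ≠ 0) (m j : ℕ) :
    qp ((q^(m+1))⁻¹) q (j+1)
      = (q^(j+1))⁻¹ * (qp ((q^m)⁻¹) q (j+1) - (1 - q^(j+1)) * qp ((q^m)⁻¹) q j) := by
  have h1 : ((q^(m+1))⁻¹ : ℂ) * q = (q^m)⁻¹ := by
    field_simp
    ring
  rw [qp_succ', h1, qp_succ]
  have hqj : (q : ℂ)^(j+1) ≠ 0 := pow_ne_zero _ hq0
  have hqm : (q : ℂ)^(m+1) ≠ 0 := pow_ne_zero _ hq0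
  have hqm' : (q : ℂ)^m ≠ 0 := pow_ne_zero _ hq0
  field_simp
  ring

lemma aux (q b : ℂ) (hq0 : q ≠ 0) (hb : b ≠ 0) : ∀ (n : ℕ) (c : ℂ),
    qp c q n ≠ 0 → (∀ j : ℕ, j ≤ n → qp q q j * qp c q j ≠ 0) →
    ∑ j ∈ Finset.range (n + 1),
        qp ((q^n)⁻¹) q j * qp b q j / (qp q q j * qp c q j) * q ^ j
      = b ^ n * qp (c / b) q n / qp c q n := by
  intro n
  induction n with
  | zero =>
    intro c _ _
    simp [qp]
  | succ n IH =>
    intro c hc hden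
    have hQ : ∀ j : ℕ, j ≤ n+1 → qp q q j ≠ 0 := by
      intro j hj h
      exact hden j hj (by rw [h, zero_mul])
    have hC : ∀ j : ℕ, j ≤ n+1 → qp c q j ≠ 0 := by
      intro j hj h
      exact hden j hj (by rw [h, mul_zero])
    have h1c : (1 : ℂ) - c ≠ 0 := by
      intro h
      apply hC 1 (by omega)
      rw [qp_succ, qp_zero, pow_zero, mul_one, one_mul, h]
    have hcq : ∀ j : ℕ, j ≤ n → qp (c*q) q j ≠ 0 := by
      intro j hj h
      apply hC (j+1) (by omega)
      rw [qp_succ', h, mul_zero]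
    have hdq : ∀ j : ℕ, j ≤ n → qp q q j * qp (c*q) q j ≠ 0 :=
      fun j hj => mul_ne_zero (hQ j (by omega)) (hcq j hj)
    set a : ℂ := (q^n)⁻¹ with ha
    have hIH := IH (c*q) (hcq n le_rfl) hdq
    have main :
        ∑ j ∈ Finset.range (n + 1 + 1),
            qp ((q^(n+1))⁻¹) q j * qp b q j / (qp q q j * qp c q j) * q ^ j
          = ∑ j ∈ Finset.range (n + 1),
              (qp a q j * qp b q j / (qp q q j * qp c q j)
                - qp a q j * qp b q (j+1) / (qp q q j * qp c q (j+1))) := by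
      rw [Finset.sum_range_succ']
      have step1 : ∀ j ∈ Finset.range (n+1),
          qp ((q^(n+1))⁻¹) q (j+1) * qp b q (j+1) / (qp q q (j+1) * qp c q (j+1)) * q ^ (j+1)
            = qp a q (j+1) * qp b q (j+1) / (qp q q (j+1) * qp c q (j+1))
              - qp a q j * qp b q (j+1) / (qp q q j * qp c q (j+1)) := by
        intro j hj
        rw [Finset.mem_range] at hj
        rw [key q hq0 n j]
        have hq1 : qp q q (j+1) = qp q q j * (1 - q * q ^ j) := qp_succ q q j
        have hf1 : (1 : ℂ) - q * q ^ j ≠ 0 := by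
          intro h
          apply hQ (j+1) (by omega)
          rw [hq1, h, mul_zero]
        have hqqj : qp q q j ≠ 0 := hQ j (by omega)
        have hccj : qp c q (j+1) ≠ 0 := hC (j+1) (by omega)
        have hpj : (q : ℂ)^(j+1) ≠ 0 := pow_ne_zero _ hq0
        rw [hq1]
        rw [← ha]
        field_simp
        ring
      rw [Finset.sum_congr rfl step1]
      rw [Finset.sum_sub_distrib, Finset.sum_sub_distrib]
      have e0 : qp ((q^(n+1))⁻¹) q 0 * qp b q 0 / (qp q q 0 * qp c q 0) * q ^ 0
          = qp a q 0 * qp b q 0 / (qp q q 0 * qp c q 0) := by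
        simp [qp]
      rw [e0]
      have e1 : ∑ j ∈ Finset.range (n+1),
            qp a q (j+1) * qp b q (j+1) / (qp q q (j+1) * qp c q (j+1))
            + qp a q 0 * qp b q 0 / (qp q q 0 * qp c q 0)
          = ∑ j ∈ Finset.range (n+1+1),
            qp a q j * qp b q j / (qp q q j * qp c q j) :=
        (Finset.sum_range_succ' (fun j => qp a q j * qp b q j / (qp q q j * qp c q j)) (n+1)).symm
      have e2 : ∑ j ∈ Finset.range (n+1+1),
            qp a q j * qp b q j / (qp q q j * qp c q j)
          = ∑ j ∈ Finset.range (n+1),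
            qp a q j * qp b q j / (qp q q j * qp c q j) := by
        rw [Finset.sum_range_succ, ha, qp_vanish q hq0 n, zero_mul, zero_div, add_zero]
      linear_combination e1.trans e2
    rw [main]
    have step2 : ∀ j ∈ Finset.range (n+1),
        qp a q j * qp b q j / (qp q q j * qp c q j)
          - qp a q j * qp b q (j+1) / (qp q q j * qp c q (j+1))
        = (b - c)/(1 - c) * (qp a q j * qp b q j / (qp q q j * qp (c*q) q j) * q ^ j) := by
      intro j hj
      rw [Finset.mem_range] at hj
      have hj' : j ≤ n := by omega
      have h' : (1 - c) * qp (c*q) q j = qp c q j * (1 - c * q^j) := by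
        rw [← qp_succ', qp_succ]
      have hcj : qp c q j ≠ 0 := hC j (by omega)
      have hqqj : qp q q j ≠ 0 := hQ j (by omega)
      have hcqj : qp (c*q) q j ≠ 0 := hcq j hj'
      have hf : (1 : ℂ) - c * q ^ j ≠ 0 := by
        intro h
        apply hC (j+1) (by omega)
        rw [qp_succ, h, mul_zero]
      rw [qp_succ b q j, qp_succ c q j]
      have hcc : qp (c*q) q j = qp c q j * (1 - c * q^j) / (1 - c) := by
        field_simp
        linear_combination h'
      rw [hcc]
      have hf' : (1 : ℂ) - q ^ j * c ≠ 0 := by rwa [mul_comm]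
      field_simp
      ring
    rw [Finset.sum_congr rfl step2, ← Finset.mul_sum, hIH]
    rw [qp_succ' (c/b) q n, qp_succ' c q n]
    have hd : c/b*q = c*q/b := by ring
    rw [hd]
    have hcqn : qp (c*q) q n ≠ 0 := hcq n le_rfl
    field_simp
    ring

theorem stmt4 (q b c : ℂ) (hq : ‖q‖ < 1) (hq0 : q ≠ 0) (hb : b ≠ 0) (n : ℕ)
    (hc : qp c q n ≠ 0)
    (hden : ∀ j : ℕ, j ≤ n → qp q q j * qp c q j ≠ 0) :
    ∑ j ∈ Finset.range (n + 1),
        qp (q ^ (-(n : ℤ))) q j * qp b q j / (qp q q j * qp c q j) * q ^ j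
      = b ^ n * qp (c / b) q n / qp c q n := by
  have h : (q : ℂ) ^ (-(n:ℤ)) = (q^n)⁻¹ := by
    rw [zpow_neg, zpow_natCast]
  rw [h]
  exact aux q b hq0 hb n c hc hden
end

section
/- Symmetry of the two-sided generating function of the (q,μ,ν)-deformed binomial distribution: for |q|<1, 0 < μ < 1, 0 ≤ ν ≤ μ, and all m, y ∈ ℕ, ∑_{j=0}^{m} φ_{q,μ,ν}(j|m) q^{j y} = ∑_{s=0}^{y} φ_{q,μ,ν}(s|y) q^{s m}. -/
noncomputable def qpR (a q : ℝ) (n : ℕ) : ℝ := ∏ i ∈ Finset.range n, (1 - a * q ^ i)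

noncomputable def phi (q μ ν : ℝ) (j m : ℕ) : ℝ :=
  μ ^ j * qpR (ν / μ) q j * qpR μ q (m - j) * qpR q q m
    / (qpR ν q m * qpR q q j * qpR q q (m - j))

/-- Gaussian binomial coefficient as a real number, defined by the q-Pascal recurrence. -/
noncomputable def qb (q : ℝ) : ℕ → ℕ → ℝ
  | 0, 0 => 1
  | 0, _+1 => 0
  | _+1, 0 => 1
  | n+1, k+1 => qb q n (k+1) + q ^ (n-k) * qb q n k

lemma qb_zero (q : ℝ) (n : ℕ) : qb q n 0 = 1 := by cases n <;> rfl

lemma qb_succ (q : ℝ) (n k : ℕ) :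
    qb q (n+1) (k+1) = qb q n (k+1) + q ^ (n-k) * qb q n k := rfl

lemma qb_eq_zero (q : ℝ) {n k : ℕ} (h : n < k) : qb q n k = 0 := by
  induction n generalizing k with
  | zero => cases k with
    | zero => omega
    | succ k => rfl
  | succ n ih =>
    cases k with
    | zero => omega
    | succ k =>
      rw [qb_succ, ih (by omega), ih (by omega)]
      ring

lemma qb_diag (q : ℝ) (n : ℕ) : qb q n n = 1 := by
  induction n with
  | zero => rfl
  | succ n ih =>
    rw [qb_succ, ih, qb_eq_zero q (by omega)]
    simp

lemma qpR_succ (a q : ℝ) (n : ℕ) : qpR a q (n+1) = qpR a q n * (1 - a * q ^ n) :=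
  Finset.prod_range_succ _ _

lemma qpR_zero (a q : ℝ) : qpR a q 0 = 1 := rfl

lemma qpR_add (a q : ℝ) (s k : ℕ) :
    qpR a q (s + k) = qpR a q s * qpR (a * q ^ s) q k := by
  induction k with
  | zero => simp [qpR_zero]
  | succ k ih =>
    rw [show s + (k+1) = (s+k)+1 by ring, qpR_succ, ih, qpR_succ, pow_add]
    ring

lemma qpR_ne_zero {a q : ℝ} (ha : |a| < 1) (hq : |q| ≤ 1) (n : ℕ) : qpR a q n ≠ 0 := by
  unfold qpR
  apply Finset.prod_ne_zero_iff.2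
  intro i _
  have h1 : |a * q ^ i| < 1 := by
    calc |a * q ^ i| = |a| * |q| ^ i := by rw [abs_mul, abs_pow]
    _ ≤ |a| * 1 := by
        apply mul_le_mul_of_nonneg_left _ (abs_nonneg a)
        exact pow_le_one₀ (abs_nonneg q) hq
    _ < 1 := by simpa using ha
  intro h
  rw [sub_eq_zero] at h
  rw [← h] at h1
  simp at h1

lemma qb_sym (q : ℝ) (n k : ℕ) :
    (1 - q ^ (k+1)) * qb q n (k+1) = (1 - q ^ (n-k)) * qb q n k := by
  induction n generalizing k with
  | zero =>
    rw [qb_eq_zero q (by omega)]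
    simp
  | succ n ih =>
    by_cases hk : k ≤ n
    · rw [qb_succ]
      have lhs : (1 - q ^ (k+1)) * (qb q n (k+1) + q ^ (n-k) * qb q n k)
          = (1 - q ^ (n+1)) * qb q n k := by
        have h1 := ih k
        have he : q ^ (n-k) * q ^ (k+1) = q ^ (n+1) := by
          rw [← pow_add]; congr 1; omega
        linear_combination h1 - qb q n k * he
      rw [lhs]
      cases k with
      | zero =>
        rw [qb_zero, qb_zero]
        simp
      | succ k' =>
        rw [qb_succ]
        have h2 := ih k'
        have hn : n + 1 - (k'+1) = n - k' := by omega
        rw [hn]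
        have he : q ^ (n - k') * q ^ (k'+1) = q ^ (n+1) := by
          rw [← pow_add]; congr 1; omega
        linear_combination q^(n-k') * h2 + qb q n (k'+1) * he
    · rw [qb_eq_zero q (show n+1 < k+1 by omega)]
      by_cases hk2 : k = n + 1
      · subst hk2
        simp
      · rw [qb_eq_zero q (show n+1 < k by omega)]
        simp

lemma qb_pascal' (q : ℝ) (n k : ℕ) :
    qb q (n+1) (k+1) = q ^ (k+1) * qb q n (k+1) + qb q n k := by
  rw [qb_succ]
  linear_combination qb_sym q n k

lemma qb_mul (q : ℝ) {n j : ℕ} (h : j ≤ n) :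
    qb q n j * (qpR q q j * qpR q q (n-j)) = qpR q q n := by
  induction n generalizing j with
  | zero =>
    interval_cases j
    simp [qb_zero, qpR_zero]
  | succ n ih =>
    cases j with
    | zero =>
      simp [qb_zero, qpR_zero]
    | succ k =>
      by_cases hk : k + 1 ≤ n
      · rw [qb_succ]
        have i1 := ih hk
        have i2 := ih (show k ≤ n by omega)
        have e1 : n + 1 - (k+1) = (n - (k+1)) + 1 := by omega
        have e2 : n - k = (n - (k+1)) + 1 := by omega
        have e3 : qpR q q (k+1) = qpR q q k * (1 - q ^ (k+1)) := by
          rw [qpR_succ, pow_succ]; ring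
        have eD : qpR q q (n-k) = qpR q q (n-(k+1)) * (1 - q ^ (n-k)) := by
          rw [e2, qpR_succ, pow_succ]; ring
        have e5 : q ^ (n-k) * q ^ (k+1) = q ^ (n+1) := by
          rw [← pow_add]; congr 1; omega
        have e6 : qpR q q (n+1) = qpR q q n * (1 - q ^ (n+1)) := by
          rw [qpR_succ, pow_succ]; ring
        rw [e1, qpR_succ q q (n - (k+1)),
          show q * q ^ (n - (k+1)) = q ^ (n-k) by rw [e2, pow_succ]; ring,
          e3, e6]
        rw [e3] at i1
        rw [eD] at i2
        linear_combination (1 - q^(n-k)) * i1 + q^(n-k)*(1 - q^(k+1)) * i2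
          - qpR q q n * e5
      · have hk2 : k + 1 = n + 1 := by omega
        rw [hk2, qb_diag]
        have : n + 1 - (n+1) = 0 := by omega
        rw [this, qpR_zero]
        ring

/-- q-Newton expansion: `z^y = ∑_s [y,s]_q ∏_{i<s}(z - q^i)`. -/
lemma qnewton (q z : ℝ) (y : ℕ) :
    z ^ y = ∑ s ∈ Finset.range (y+1), qb q y s * ∏ i ∈ Finset.range s, (z - q ^ i) := by
  induction y with
  | zero => simp [qb_zero]
  | succ y ih =>
    have key : ∀ s : ℕ, z * ∏ i ∈ Finset.range s, (z - q ^ i)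
        = (∏ i ∈ Finset.range (s+1), (z - q ^ i)) + q ^ s * ∏ i ∈ Finset.range s, (z - q ^ i) := by
      intro s
      rw [Finset.prod_range_succ]
      ring
    have step : z ^ (y+1)
        = (∑ s ∈ Finset.range (y+1), qb q y s * ∏ i ∈ Finset.range (s+1), (z - q ^ i))
          + ∑ s ∈ Finset.range (y+1), qb q y s * q ^ s * ∏ i ∈ Finset.range s, (z - q ^ i) := by
      rw [pow_succ, ih, Finset.sum_mul, ← Finset.sum_add_distrib]
      refine Finset.sum_congr rfl fun s _ => ?_
      linear_combination qb q y s * key s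
    have key2 := Finset.sum_range_succ'
      (fun s => qb q y s * q ^ s * ∏ i ∈ Finset.range s, (z - q ^ i)) (y+1)
    have key3 := Finset.sum_range_succ
      (fun s => qb q y s * q ^ s * ∏ i ∈ Finset.range s, (z - q ^ i)) (y+1)
    rw [qb_eq_zero q (show y < y+1 by omega)] at key3
    rw [Finset.sum_range_succ'
      (fun s => qb q (y+1) s * ∏ i ∈ Finset.range s, (z - q ^ i)) (y+1)]
    have h4 : ∑ s ∈ Finset.range (y+1), qb q (y+1) (s+1) * ∏ i ∈ Finset.range (s+1), (z - q ^ i)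
        = (∑ s ∈ Finset.range (y+1), qb q y s * ∏ i ∈ Finset.range (s+1), (z - q ^ i))
          + ∑ s ∈ Finset.range (y+1), qb q y (s+1) * q ^ (s+1) * ∏ i ∈ Finset.range (s+1), (z - q ^ i) := by
      rw [← Finset.sum_add_distrib]
      refine Finset.sum_congr rfl fun s _ => ?_
      rw [qb_pascal']
      ring
    rw [step, h4, qb_zero]
    simp only [Finset.range_zero, Finset.prod_empty, mul_one, pow_zero, zero_mul, mul_zero,
      add_zero, one_mul] at key2 key3 ⊢
    rw [qb_zero] at key2
    linarith [key2, key3]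

/-- constant (depending only on s) for the falling product. -/
noncomputable def fallc (q : ℝ) (s : ℕ) : ℝ := ∏ i ∈ Finset.range s, (q ^ i * (q ^ (i+1) - 1))

lemma fall_prod (q : ℝ) (j s : ℕ) :
    (∏ i ∈ Finset.range s, (q ^ j - q ^ i)) = fallc q s * qb q j s := by
  induction s with
  | zero => simp [fallc, qb_zero]
  | succ s ih =>
    rw [Finset.prod_range_succ, ih]
    unfold fallc
    rw [Finset.prod_range_succ]
    by_cases hs : s ≤ j
    · have key : q ^ s * (q ^ (s+1) - 1) * qb q j (s+1) = qb q j s * (q ^ j - q ^ s) := by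
        have h := qb_sym q j s
        have he : q ^ s * q ^ (j - s) = q ^ j := by
          rw [← pow_add]; congr 1; omega
        linear_combination (-(q^s)) * h + qb q j s * he
      linear_combination (-(∏ i ∈ Finset.range s, (q ^ i * (q ^ (i+1) - 1)))) * key
    · rw [qb_eq_zero q (show j < s by omega), qb_eq_zero q (show j < s + 1 by omega)]
      ring

/-- q-Vandermonde: `∑_k [n,k] c^k (b;q)_k (c;q)_{n-k} = (bc;q)_n`. -/
lemma qvandermonde (q b c : ℝ) (n : ℕ) :
    ∑ k ∈ Finset.range (n+1), qb q n k * c ^ k * qpR b q k * qpR c q (n-k)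
      = qpR (b*c) q n := by
  induction n with
  | zero => simp [qb_zero, qpR_zero]
  | succ n ih =>
    have key2 := Finset.sum_range_succ'
      (fun k => qb q (n+1) k * c ^ k * qpR b q k * qpR c q (n+1-k)) (n+1)
    rw [key2]
    have hA : ∀ k ∈ Finset.range (n+1),
        qb q (n+1) (k+1) * c ^ (k+1) * qpR b q (k+1) * qpR c q (n+1-(k+1))
        = qb q n (k+1) * c ^ (k+1) * qpR b q (k+1) * qpR c q ((n+1)-(k+1))
          + q ^ (n-k) * qb q n k * c ^ (k+1) * qpR b q (k+1) * qpR c q (n-k) := by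
      intro k _
      rw [qb_succ]
      have : n + 1 - (k+1) = n - k := by omega
      rw [this]
      ring
    rw [Finset.sum_congr rfl hA, Finset.sum_add_distrib]
    -- first part plus the k=0 term recombines
    have key3 := Finset.sum_range_succ'
      (fun k => qb q n k * c ^ k * qpR b q k * qpR c q (n+1-k)) (n+1)
    have key4 := Finset.sum_range_succ
      (fun k => qb q n k * c ^ k * qpR b q k * qpR c q (n+1-k)) (n+1)
    rw [qb_eq_zero q (show n < n + 1 by omega)] at key4
    have hzero : qb q (n+1) 0 * c ^ 0 * qpR b q 0 * qpR c q (n+1-0)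
        = qb q n 0 * c ^ 0 * qpR b q 0 * qpR c q (n+1-0) := by
      rw [qb_zero, qb_zero]
    rw [hzero]
    have hrecomb : (∑ k ∈ Finset.range (n+1),
          qb q n (k+1) * c ^ (k+1) * qpR b q (k+1) * qpR c q (n+1-(k+1)))
        + qb q n 0 * c ^ 0 * qpR b q 0 * qpR c q (n+1-0)
        = ∑ k ∈ Finset.range (n+1), qb q n k * c ^ k * qpR b q k * qpR c q (n+1-k) := by
      rw [← key3, key4]
      simp
    rw [add_right_comm, hrecomb]
    -- now combine pointwise
    have hcomb : ∀ k ∈ Finset.range (n+1),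
        qb q n k * c ^ k * qpR b q k * qpR c q (n+1-k)
          + q ^ (n-k) * qb q n k * c ^ (k+1) * qpR b q (k+1) * qpR c q (n-k)
        = (1 - b*c*q^n) * (qb q n k * c ^ k * qpR b q k * qpR c q (n-k)) := by
      intro k hk
      have hkn : k ≤ n := by
        simp only [Finset.mem_range] at hk; omega
      have h1 : n + 1 - k = (n-k) + 1 := by omega
      rw [h1, qpR_succ, qpR_succ b q k]
      have h2 : q ^ (n-k) * q ^ k = q ^ n := by
        rw [← pow_add]; congr 1; omega
      linear_combination (-(qb q n k * c ^ (k+1) * qpR b q k * qpR c q (n-k) * b)) * h2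
    rw [← Finset.sum_add_distrib, Finset.sum_congr rfl hcomb, ← Finset.mul_sum, ih,
      qpR_succ]
    ring

lemma qb_div {q : ℝ} (hq : |q| < 1) {n j : ℕ} (h : j ≤ n) :
    qb q n j = qpR q q n / (qpR q q j * qpR q q (n-j)) := by
  have h1 := qpR_ne_zero hq (le_of_lt hq) j
  have h2 := qpR_ne_zero hq (le_of_lt hq) (n-j)
  rw [eq_div_iff (mul_ne_zero h1 h2)]
  exact qb_mul q h

lemma qb_trinomial {q : ℝ} (hq : |q| < 1) {m j s : ℕ} (hs : s ≤ j) (hj : j ≤ m) :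
    qb q m j * qb q j s = qb q m s * qb q (m-s) (j-s) := by
  have hne : ∀ n : ℕ, qpR q q n ≠ 0 := fun n => qpR_ne_zero hq (le_of_lt hq) n
  have h1 := qb_mul q hj
  have h2 := qb_mul q hs
  have h3 := qb_mul q (show s ≤ m by omega)
  have h4 := qb_mul q (show j - s ≤ m - s by omega)
  rw [show (m-s) - (j-s) = m - j by omega] at h4
  have hC : qpR q q s * qpR q q (j-s) * qpR q q (m-j) ≠ 0 :=
    mul_ne_zero (mul_ne_zero (hne s) (hne (j-s))) (hne (m-j))
  apply mul_right_cancel₀ hC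
  linear_combination (qb q m j * qpR q q (m-j)) * h2 + h1
    - (qb q m s * qpR q q s) * h4 - h3

lemma innerSumPhi (q : ℝ) (hq : |q| < 1) (μ ν : ℝ) (m s : ℕ) :
    ∑ j ∈ Finset.range (m+1),
        μ^j * qpR (ν/μ) q j * qpR μ q (m-j) * qb q m j * qb q j s
      = μ^s * qpR (ν/μ) q s * qb q m s * qpR (ν / μ * q ^ s * μ) q (m-s) := by
  by_cases hsm : s ≤ m
  · have hsub : Finset.Ico s (m+1) ⊆ Finset.range (m+1) := by
      rw [Finset.range_eq_Ico]
      exact Finset.Ico_subset_Ico (by omega) (le_refl _)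
    have hvanish : ∀ x ∈ Finset.range (m+1), x ∉ Finset.Ico s (m+1) →
        μ^x * qpR (ν/μ) q x * qpR μ q (m-x) * qb q m x * qb q x s = 0 := by
      intro x hx1 hx2
      simp only [Finset.mem_range] at hx1
      simp only [Finset.mem_Ico] at hx2
      have : x < s := by omega
      rw [qb_eq_zero q this]
      ring
    rw [← Finset.sum_subset hsub hvanish]
    rw [Finset.sum_Ico_eq_sum_range]
    rw [show m + 1 - s = (m - s) + 1 by omega]
    have hterm : ∀ i ∈ Finset.range ((m-s)+1),
        μ^(s+i) * qpR (ν/μ) q (s+i) * qpR μ q (m-(s+i)) * qb q m (s+i) * qb q (s+i) s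
        = (μ^s * qpR (ν/μ) q s * qb q m s)
            * (qb q (m-s) i * μ^i * qpR (ν / μ * q ^ s) q i * qpR μ q ((m-s)-i)) := by
      intro i hi
      simp only [Finset.mem_range] at hi
      have hle : s + i ≤ m := by omega
      have e1 : m - (s+i) = (m-s) - i := by omega
      have e2 : qb q m (s+i) * qb q (s+i) s = qb q m s * qb q (m-s) i := by
        rw [qb_trinomial hq (show s ≤ s + i by omega) hle,
          show s + i - s = i by omega]
      rw [pow_add, qpR_add (ν/μ) q s i, e1]
      linear_combination
        (μ^s * μ^i * qpR (ν/μ) q s * qpR (ν / μ * q ^ s) q i * qpR μ q ((m-s)-i)) * e2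
    rw [Finset.sum_congr rfl hterm, ← Finset.mul_sum]
    congr 1
    exact qvandermonde q (ν / μ * q ^ s) μ (m-s)
  · rw [qb_eq_zero q (show m < s by omega)]
    rw [Finset.sum_eq_zero]
    · ring
    · intro x hx
      simp only [Finset.mem_range] at hx
      rw [qb_eq_zero q (show x < s by omega)]
      ring

lemma onesided (q μ ν : ℝ) (hq : |q| < 1) (hν : 0 ≤ ν) (hνμ : ν ≤ μ)
    (hμ0 : 0 < μ) (hμ : μ < 1) (m y : ℕ) :
    ∑ j ∈ Finset.range (m + 1), phi q μ ν j m * q ^ (j * y)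
      = ∑ s ∈ Finset.range (y+1),
          (fallc q s * μ^s * qpR (ν/μ) q s / qpR ν q s) * qb q m s * qb q y s := by
  have hq1 : |q| ≤ 1 := le_of_lt hq
  have hPq : ∀ n, qpR q q n ≠ 0 := fun n => qpR_ne_zero hq hq1 n
  have hν1 : |ν| < 1 := by rw [abs_of_nonneg hν]; linarith
  have hPν : ∀ n, qpR ν q n ≠ 0 := fun n => qpR_ne_zero hν1 hq1 n
  have hμne : μ ≠ 0 := ne_of_gt hμ0
  have stepA : ∀ j ∈ Finset.range (m+1),
      phi q μ ν j m * q ^ (j * y)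
      = ∑ s ∈ Finset.range (y+1),
          (qb q y s * fallc q s / qpR ν q m)
            * (μ^j * qpR (ν/μ) q j * qpR μ q (m-j) * qb q m j * qb q j s) := by
    intro j hj
    have hjm : j ≤ m := by simp only [Finset.mem_range] at hj; omega
    have hphi : phi q μ ν j m
        = μ^j * qpR (ν/μ) q j * qpR μ q (m-j) * qb q m j / qpR ν q m := by
      unfold phi
      rw [← qb_mul q hjm]
      rw [div_eq_div_iff
        (mul_ne_zero (mul_ne_zero (hPν m) (hPq j)) (hPq (m-j))) (hPν m)]
      ring
    have hpow : q ^ (j*y) = ∑ s ∈ Finset.range (y+1), qb q y s * (fallc q s * qb q j s) := by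
      rw [pow_mul, qnewton q (q^j) y]
      exact Finset.sum_congr rfl fun s _ => by rw [fall_prod]
    rw [hphi, hpow, Finset.mul_sum]
    exact Finset.sum_congr rfl fun s _ => by ring
  rw [Finset.sum_congr rfl stepA, Finset.sum_comm]
  refine Finset.sum_congr rfl fun s hs => ?_
  rw [← Finset.mul_sum, innerSumPhi q hq μ ν m s]
  by_cases hsm : s ≤ m
  · have hsplit : qpR ν q m = qpR ν q s * qpR (ν * q^s) q (m-s) := by
      have h := qpR_add ν q s (m-s)
      rw [show s + (m-s) = m by omega] at h
      exact h
    have hmu : ν / μ * q^s * μ = ν * q^s := by field_simp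
    rw [hmu, hsplit]
    have h2 : qpR (ν*q^s) q (m-s) ≠ 0 := by
      intro h
      apply hPν m
      rw [hsplit, h, mul_zero]
    rw [div_mul_eq_mul_div, div_mul_eq_mul_div, div_mul_eq_mul_div,
      div_eq_div_iff (mul_ne_zero (hPν s) h2) (hPν s)]
    ring
  · rw [qb_eq_zero q (show m < s by omega)]
    ring

theorem stmt7 (q μ ν : ℝ) (hq : |q| < 1) (hν : 0 ≤ ν) (hνμ : ν ≤ μ)
    (hμ0 : 0 < μ) (hμ : μ < 1) (m y : ℕ) :
    ∑ j ∈ Finset.range (m + 1), phi q μ ν j m * q ^ (j * y)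
      = ∑ s ∈ Finset.range (y + 1), phi q μ ν s y * q ^ (s * m) := by
  rw [onesided q μ ν hq hν hνμ hμ0 hμ m y, onesided q μ ν hq hν hνμ hμ0 hμ y m]
  have gen : ∀ a b : ℕ,
      (∑ s ∈ Finset.range (b+1),
        (fallc q s * μ^s * qpR (ν/μ) q s / qpR ν q s) * qb q a s * qb q b s)
      = ∑ s ∈ Finset.range (a+b+2),
        (fallc q s * μ^s * qpR (ν/μ) q s / qpR ν q s) * qb q a s * qb q b s := by
    intro a b
    apply Finset.sum_subset
    · exact Finset.range_subset_range.2 (by omega)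
    · intro x _ hx2
      simp only [Finset.mem_range] at hx2
      rw [qb_eq_zero q (show b < x by omega)]
      ring
  rw [gen m y, gen y m, show y + m + 2 = m + y + 2 by omega]
  exact Finset.sum_congr rfl fun s _ => by ring
end
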